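/- Let A = ℂ[x,y,z] be a polynomial ring graded with deg x = 2, deg y = 4, deg z = 6. The subalgebra B of A generated by x² − 48y, x³ − 72xy, z, xz, yz has Hilbert series Σ_k dim(B_k) t^k = (1 + t⁸ + t¹⁰)/((1−t⁴)(1−t⁶)²). -/

import Mathlib

open MvPolynomial

/-- Weights: `deg x = 2`, `deg y = 4`, `deg z = 6`. -/
def wts : Fin 3 → ℕ := ![2, 4, 6]

noncomputable def xP : MvPolynomial (Fin 3) ℂ := X 0
noncomputable def yP : MvPolynomial (Fin 3) ℂ := X 1
noncomputable def zP : MvPolynomial (Fin 3) ℂ := X 2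

/-- The subalgebra generated by `x² − 48y`, `x³ − 72xy`, `z`, `xz`, `yz`. -/
noncomputable def B : Subalgebra ℂ (MvPolynomial (Fin 3) ℂ) :=
  Algebra.adjoin ℂ {xP ^ 2 - 48 * yP, xP ^ 3 - 72 * xP * yP, zP, xP * zP, yP * zP}

/-- The `k`-th graded piece of `B` with respect to the weighted grading. -/
noncomputable def Bk (k : ℕ) : Submodule ℂ (MvPolynomial (Fin 3) ℂ) :=
  Subalgebra.toSubmodule B ⊓ weightedHomogeneousSubmodule ℂ wts k

/-! ### Combinatorial counting functions -/

/-- triples `(j,m,k)` with `4j+6m+6k = n` -/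
def T3 (n : ℕ) : Finset (ℕ × ℕ × ℕ) :=
  (Finset.range (n+1) ×ˢ Finset.range (n+1) ×ˢ Finset.range (n+1)).filter
    (fun t => 4*t.1 + 6*t.2.1 + 6*t.2.2 = n)

def T2 (n : ℕ) : Finset (ℕ × ℕ) :=
  (Finset.range (n+1) ×ˢ Finset.range (n+1)).filter (fun t => 4*t.1 + 6*t.2 = n)

/-- monomial exponents of weighted degree `n` -/
def Mon (n : ℕ) : Finset (ℕ × ℕ × ℕ) :=
  (Finset.range (n+1) ×ˢ Finset.range (n+1) ×ˢ Finset.range (n+1)).filter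
    (fun t => 2*t.1 + 4*t.2.1 + 6*t.2.2 = n)

def degQ (q : ℕ × ℕ × ℕ × ℕ) : ℕ := 2*q.1 + 4*q.2.1 + 6*q.2.2.1 + 6*q.2.2.2

/-- full family indices of degree `n` -/
def FF (n : ℕ) : Finset (ℕ × ℕ × ℕ × ℕ) :=
  (Finset.range 3 ×ˢ Finset.range (n+1) ×ˢ Finset.range (n+1) ×ˢ Finset.range (n+1)).filter
    (fun q => degQ q = n)

/-- constrained family indices of degree `n` -/
def FC (n : ℕ) : Finset (ℕ × ℕ × ℕ × ℕ) :=
  (Finset.range 3 ×ˢ Finset.range (n+1) ×ˢ Finset.range (n+1) ×ˢ Finset.range (n+1)).filter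
    (fun q => degQ q = n ∧ (q.1 = 0 ∨ 1 ≤ q.2.2.2))

lemma mem_T3 {n : ℕ} {t : ℕ × ℕ × ℕ} : t ∈ T3 n ↔ 4*t.1 + 6*t.2.1 + 6*t.2.2 = n := by
  simp only [T3, Finset.mem_filter, Finset.mem_product, Finset.mem_range]
  omega

lemma mem_T2 {n : ℕ} {t : ℕ × ℕ} : t ∈ T2 n ↔ 4*t.1 + 6*t.2 = n := by
  simp only [T2, Finset.mem_filter, Finset.mem_product, Finset.mem_range]
  omega

lemma mem_Mon {n : ℕ} {t : ℕ × ℕ × ℕ} : t ∈ Mon n ↔ 2*t.1 + 4*t.2.1 + 6*t.2.2 = n := by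
  simp only [Mon, Finset.mem_filter, Finset.mem_product, Finset.mem_range]
  omega

lemma mem_FF {n : ℕ} {q : ℕ × ℕ × ℕ × ℕ} : q ∈ FF n ↔ q.1 ≤ 2 ∧ degQ q = n := by
  rw [FF, Finset.mem_filter]
  simp only [FF, degQ, Finset.mem_filter, Finset.mem_product, Finset.mem_range]
  omega

lemma mem_FC {n : ℕ} {q : ℕ × ℕ × ℕ × ℕ} :
    q ∈ FC n ↔ (q.1 ≤ 2 ∧ (q.1 = 0 ∨ 1 ≤ q.2.2.2)) ∧ degQ q = n := by
  rw [FC, Finset.mem_filter]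
  simp only [FC, degQ, Finset.mem_filter, Finset.mem_product, Finset.mem_range]
  omega

lemma T3_card (n : ℕ) :
    (T3 n).card = (T2 n).card + (if 6 ≤ n then (T3 (n-6)).card else 0) := by
  classical
  rw [← Finset.card_filter_add_card_filter_not (s := T3 n) (p := fun t => t.2.2 = 0)]
  congr 1
  · refine Finset.card_bij' (fun t _ => (t.1, t.2.1)) (fun t _ => (t.1, t.2, 0)) ?_ ?_ ?_ ?_
    all_goals intro t ht
    all_goals try simp [Finset.mem_filter, mem_T3, mem_T2, mem_Mon, mem_FF, mem_FC, degQ, Prod.ext_iff] at ht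
    all_goals try simp [Finset.mem_filter, mem_T3, mem_T2, mem_Mon, mem_FF, mem_FC, degQ, Prod.ext_iff]
    all_goals omega
  · split_ifs with h
    · refine Finset.card_bij' (fun t _ => (t.1, t.2.1, t.2.2 - 1))
        (fun t _ => (t.1, t.2.1, t.2.2 + 1)) ?_ ?_ ?_ ?_
      all_goals intro t ht
      all_goals try simp [Finset.mem_filter, mem_T3, mem_T2, mem_Mon, mem_FF, mem_FC, degQ, Prod.ext_iff] at ht
      all_goals try simp [Finset.mem_filter, mem_T3, mem_T2, mem_Mon, mem_FF, mem_FC, degQ, Prod.ext_iff]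
      all_goals omega
    · rw [Finset.card_eq_zero, Finset.filter_eq_empty_iff]
      intro t ht; rw [mem_T3] at ht; omega

lemma T2_card (n : ℕ) :
    (T2 n).card = (if 4 ∣ n then 1 else 0) + (if 6 ≤ n then (T2 (n-6)).card else 0) := by
  classical
  rw [← Finset.card_filter_add_card_filter_not (s := T2 n) (p := fun t => t.2 = 0)]
  congr 1
  · split_ifs with h
    · obtain ⟨c, rfl⟩ := h
      rw [show (T2 (4*c)).filter (fun t => t.2 = 0) = {(c, 0)} by
        ext t; simp only [Finset.mem_filter, mem_T2, Finset.mem_singleton, Prod.ext_iff]; omega]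
      simp
    · rw [Finset.card_eq_zero, Finset.filter_eq_empty_iff]
      intro t ht; rw [mem_T2] at ht
      intro h0; exact h ⟨t.1, by omega⟩
  · split_ifs with h
    · refine Finset.card_bij' (fun t _ => (t.1, t.2 - 1)) (fun t _ => (t.1, t.2 + 1)) ?_ ?_ ?_ ?_
      all_goals intro t ht
      all_goals try simp [Finset.mem_filter, mem_T3, mem_T2, mem_Mon, mem_FF, mem_FC, degQ, Prod.ext_iff] at ht
      all_goals try simp [Finset.mem_filter, mem_T3, mem_T2, mem_Mon, mem_FF, mem_FC, degQ, Prod.ext_iff]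
      all_goals omega
    · rw [Finset.card_eq_zero, Finset.filter_eq_empty_iff]
      intro t ht; rw [mem_T2] at ht; omega

lemma FC_card (n : ℕ) :
    (FC n).card = (T3 n).card + ((if 8 ≤ n then (T3 (n-8)).card else 0)
      + (if 10 ≤ n then (T3 (n-10)).card else 0)) := by
  classical
  rw [← Finset.card_filter_add_card_filter_not (s := FC n) (p := fun q => q.1 = 0)]
  congr 1
  · refine Finset.card_bij' (fun q _ => q.2) (fun t _ => (0, t)) ?_ ?_ ?_ ?_
    all_goals intro t ht
    all_goals try simp [Finset.mem_filter, mem_T3, mem_T2, mem_Mon, mem_FF, mem_FC, degQ, Prod.ext_iff] at ht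
    all_goals try simp [Finset.mem_filter, mem_T3, mem_T2, mem_Mon, mem_FF, mem_FC, degQ, Prod.ext_iff]
    all_goals omega
  · rw [← Finset.card_filter_add_card_filter_not
      (s := (FC n).filter (fun q => ¬ q.1 = 0)) (p := fun q => q.1 = 1)]
    congr 1
    · split_ifs with h
      · refine Finset.card_bij' (fun q _ => (q.2.1, q.2.2.1, q.2.2.2 - 1))
          (fun t _ => (1, t.1, t.2.1, t.2.2 + 1)) ?_ ?_ ?_ ?_
        all_goals intro t ht
        all_goals try simp [Finset.mem_filter, mem_T3, mem_T2, mem_Mon, mem_FF, mem_FC, degQ, Prod.ext_iff] at ht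
        all_goals try simp [Finset.mem_filter, mem_T3, mem_T2, mem_Mon, mem_FF, mem_FC, degQ, Prod.ext_iff]
        all_goals omega
      · rw [Finset.card_eq_zero, Finset.filter_eq_empty_iff]
        intro q hq; simp [Finset.mem_filter, mem_T3, mem_T2, mem_Mon, mem_FF, mem_FC, degQ, Prod.ext_iff] at hq; omega
    · split_ifs with h
      · refine Finset.card_bij' (fun q _ => (q.2.1, q.2.2.1, q.2.2.2 - 1))
          (fun t _ => (2, t.1, t.2.1, t.2.2 + 1)) ?_ ?_ ?_ ?_
        all_goals intro t ht
        all_goals try simp [Finset.mem_filter, mem_T3, mem_T2, mem_Mon, mem_FF, mem_FC, degQ, Prod.ext_iff] at ht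
        all_goals try simp [Finset.mem_filter, mem_T3, mem_T2, mem_Mon, mem_FF, mem_FC, degQ, Prod.ext_iff]
        all_goals omega
      · rw [Finset.card_eq_zero, Finset.filter_eq_empty_iff]
        intro q hq; simp [Finset.mem_filter, mem_T3, mem_T2, mem_Mon, mem_FF, mem_FC, degQ, Prod.ext_iff] at hq; omega

lemma Mon_card (n : ℕ) : (Mon n).card = (FF n).card := by
  classical
  refine Finset.card_bij' (fun t _ => (t.1 % 3, t.2.1, t.1 / 3, t.2.2))
    (fun q _ => (q.1 + 3 * q.2.2.1, q.2.1, q.2.2.2)) ?_ ?_ ?_ ?_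
  all_goals intro t ht
  all_goals try simp [Finset.mem_filter, mem_T3, mem_T2, mem_Mon, mem_FF, mem_FC, degQ, Prod.ext_iff] at ht
  all_goals try simp [Finset.mem_filter, mem_T3, mem_T2, mem_Mon, mem_FF, mem_FC, degQ, Prod.ext_iff]
  all_goals omega

/-! ### Power series lemmas -/

open PowerSeries in
lemma mk_mul_one_sub_pow (f : ℕ → ℤ) (d : ℕ) :
    (PowerSeries.mk f) * (1 - (X : ℤ⟦X⟧)^d)
      = PowerSeries.mk (fun n => f n - if d ≤ n then f (n-d) else 0) := by
  ext n
  simp [mul_sub, coeff_mul_X_pow', sub_right_comm]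

open PowerSeries in
lemma series_T2 : (PowerSeries.mk fun n => ((T2 n).card : ℤ)) * (1 - (X : ℤ⟦X⟧)^6)
    = PowerSeries.mk (fun n => if 4 ∣ n then 1 else 0) := by
  rw [mk_mul_one_sub_pow]
  ext n
  simp only [PowerSeries.coeff_mk]
  have := T2_card n
  split_ifs at this ⊢ <;> push_cast [this] <;> ring

open PowerSeries in
lemma series_T3 : (PowerSeries.mk fun n => ((T3 n).card : ℤ)) * (1 - (X : ℤ⟦X⟧)^6)
    = PowerSeries.mk (fun n => ((T2 n).card : ℤ)) := by
  rw [mk_mul_one_sub_pow]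
  ext n
  simp only [PowerSeries.coeff_mk]
  have := T3_card n
  split_ifs at this ⊢ <;> push_cast [this] <;> ring

open PowerSeries in
lemma series_ind : (PowerSeries.mk fun n => if 4 ∣ n then (1:ℤ) else 0) * (1 - (X : ℤ⟦X⟧)^4)
    = 1 := by
  rw [mk_mul_one_sub_pow]
  ext n
  simp only [PowerSeries.coeff_mk, PowerSeries.coeff_one]
  rcases Nat.lt_or_ge n 4 with h | h
  · interval_cases n <;> norm_num
  · have h4 : (4 ∣ n) ↔ (4 ∣ n - 4) := by
      constructor
      · intro hd; exact (Nat.dvd_sub hd (dvd_refl 4))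
      · intro hd; have := Nat.sub_add_cancel h; omega
    have : n ≠ 0 := by omega
    split_ifs with h1 h2 h2 <;> simp_all <;> omega

lemma series_FC : (PowerSeries.mk fun n => ((FC n).card : ℤ))
    = (1 + (PowerSeries.X : PowerSeries ℤ)^8 + PowerSeries.X^10)
        * PowerSeries.mk (fun n => ((T3 n).card : ℤ)) := by
  ext n
  rw [add_mul, add_mul, one_mul]
  simp only [map_add, PowerSeries.coeff_mk]
  rw [mul_comm ((PowerSeries.X : PowerSeries ℤ)^8), mul_comm ((PowerSeries.X : PowerSeries ℤ)^10)]
  rw [PowerSeries.coeff_mul_X_pow', PowerSeries.coeff_mul_X_pow']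
  simp only [PowerSeries.coeff_mk]
  rw [FC_card n]
  push_cast
  split_ifs <;> ring

/-! ### finrank of graded pieces -/

noncomputable def vP : MvPolynomial (Fin 3) ℂ := xP^2 - 48*yP
noncomputable def cP : MvPolynomial (Fin 3) ℂ := xP^3 - 72*xP*yP

noncomputable def E (q : ℕ × ℕ × ℕ × ℕ) : MvPolynomial (Fin 3) ℂ :=
  xP^q.1 * vP^q.2.1 * cP^q.2.2.1 * zP^q.2.2.2

/-- degree-n graded piece of the polynomial ring -/
noncomputable def Wn (n : ℕ) : Submodule ℂ (MvPolynomial (Fin 3) ℂ) :=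
  weightedHomogeneousSubmodule ℂ wts n

lemma pow_hom {φ : MvPolynomial (Fin 3) ℂ} {m : ℕ} (h : φ.IsWeightedHomogeneous wts m)
    (n : ℕ) : (φ^n).IsWeightedHomogeneous wts (n*m) := by
  induction n with
  | zero => simpa using isWeightedHomogeneous_one ℂ wts
  | succ k ih =>
    rw [pow_succ, Nat.succ_mul]
    exact ih.mul h

lemma xP_hom : xP.IsWeightedHomogeneous wts 2 := by
  have := isWeightedHomogeneous_X ℂ wts (0 : Fin 3)
  simpa [wts, xP] using this

lemma yP_hom : yP.IsWeightedHomogeneous wts 4 := by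
  have := isWeightedHomogeneous_X ℂ wts (1 : Fin 3)
  simpa [wts, yP] using this

lemma zP_hom : zP.IsWeightedHomogeneous wts 6 := by
  have := isWeightedHomogeneous_X ℂ wts (2 : Fin 3)
  simpa [wts, zP] using this

lemma C_mul_hom {φ : MvPolynomial (Fin 3) ℂ} {m : ℕ} (h : φ.IsWeightedHomogeneous wts m)
    (r : ℂ) : (C r * φ).IsWeightedHomogeneous wts m := by
  simpa using (isWeightedHomogeneous_C wts r).mul h

lemma C48 : ((C (48:ℂ)) : MvPolynomial (Fin 3) ℂ) = 48 := by
  exact map_ofNat _ 48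

lemma vP_hom : vP.IsWeightedHomogeneous wts 4 := by
  have h1 : (xP^2).IsWeightedHomogeneous wts 4 := by simpa using pow_hom xP_hom 2
  have h2 : ((48:MvPolynomial (Fin 3) ℂ) * yP).IsWeightedHomogeneous wts 4 := by
    rw [← C48]; exact C_mul_hom yP_hom 48
  have := (weightedHomogeneousSubmodule ℂ wts 4).sub_mem
    ((mem_weightedHomogeneousSubmodule _ _ _ _).2 h1)
    ((mem_weightedHomogeneousSubmodule _ _ _ _).2 h2)
  exact (mem_weightedHomogeneousSubmodule _ _ _ _).1 this

lemma C72 : ((C (72:ℂ)) : MvPolynomial (Fin 3) ℂ) = 72 := by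
  exact map_ofNat _ 72

lemma cP_hom : cP.IsWeightedHomogeneous wts 6 := by
  have h1 : (xP^3).IsWeightedHomogeneous wts 6 := by simpa using pow_hom xP_hom 3
  have h2 : ((72:MvPolynomial (Fin 3) ℂ) * xP * yP).IsWeightedHomogeneous wts 6 := by
    rw [← C72, mul_assoc]
    simpa using C_mul_hom (xP_hom.mul yP_hom) 72
  have := (weightedHomogeneousSubmodule ℂ wts 6).sub_mem
    ((mem_weightedHomogeneousSubmodule _ _ _ _).2 h1)
    ((mem_weightedHomogeneousSubmodule _ _ _ _).2 h2)
  exact (mem_weightedHomogeneousSubmodule _ _ _ _).1 this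

lemma E_hom (q : ℕ × ℕ × ℕ × ℕ) : E q ∈ Wn (degQ q) := by
  have h := (((pow_hom xP_hom q.1).mul (pow_hom vP_hom q.2.1)).mul
    (pow_hom cP_hom q.2.2.1)).mul (pow_hom zP_hom q.2.2.2)
  have e : degQ q = q.1*2 + q.2.1*4 + q.2.2.1*6 + q.2.2.2*6 := by simp [degQ]; ring
  rw [Wn, mem_weightedHomogeneousSubmodule, E, e]
  exact h

lemma x3 : xP^3 = 3*xP*vP - 2*cP := by
  simp only [vP, cP]; ring

lemma E_mul (q q' : ℕ × ℕ × ℕ × ℕ) :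
    E q * E q' = E (q.1 + q'.1, q.2.1 + q'.2.1, q.2.2.1 + q'.2.2.1, q.2.2.2 + q'.2.2.2) := by
  simp only [E, pow_add]; ring

lemma E3 (j m k : ℕ) : E (3,j,m,k) = 3 * E (1,j+1,m,k) - 2 * E (0,j,m+1,k) := by
  simp only [E, pow_succ, pow_zero]
  linear_combination (vP ^ j * cP ^ m * zP ^ k) * x3

lemma E4 (j m k : ℕ) : E (4,j,m,k) = 3 * E (2,j+1,m,k) - 2 * E (1,j,m+1,k) := by
  simp only [E, pow_succ, pow_zero]
  linear_combination (xP * vP ^ j * cP ^ m * zP ^ k) * x3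


def SF : Set (ℕ × ℕ × ℕ × ℕ) := {q | q.1 ≤ 2}
def SC : Set (ℕ × ℕ × ℕ × ℕ) := {q | q.1 ≤ 2 ∧ (q.1 = 0 ∨ 1 ≤ q.2.2.2)}

noncomputable def MF : Submodule ℂ (MvPolynomial (Fin 3) ℂ) := Submodule.span ℂ (E '' SF)
noncomputable def MC : Submodule ℂ (MvPolynomial (Fin 3) ℂ) := Submodule.span ℂ (E '' SC)

lemma mem_SC {i j m k : ℕ} : (i,j,m,k) ∈ SC ↔ i ≤ 2 ∧ (i = 0 ∨ 1 ≤ k) := Iff.rfl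

lemma E_mem_MC {q : ℕ × ℕ × ℕ × ℕ} (h : q ∈ SC) : E q ∈ MC :=
  Submodule.subset_span ⟨q, h, rfl⟩

lemma E_mem_MF {q : ℕ × ℕ × ℕ × ℕ} (h : q ∈ SF) : E q ∈ MF :=
  Submodule.subset_span ⟨q, h, rfl⟩

/-- reduction: any `x^i v^j c^m z^k` with `i ≤ 4` and the `z`-constraint lies in `MC` -/
lemma red (i j m k : ℕ) (hi : i ≤ 4) (hk : i = 0 ∨ 1 ≤ k) : E (i,j,m,k) ∈ MC := by
  interval_cases i
  · exact E_mem_MC (by rw [mem_SC]; omega)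
  · exact E_mem_MC (by rw [mem_SC]; omega)
  · exact E_mem_MC (by rw [mem_SC]; omega)
  · rw [E3]
    have h1 : E (1,j+1,m,k) ∈ MC := E_mem_MC (by rw [mem_SC]; omega)
    have h2 : E (0,j,m+1,k) ∈ MC := E_mem_MC (by rw [mem_SC]; omega)
    have h1' := MC.smul_mem (3:ℂ) h1
    have h2' := MC.smul_mem (2:ℂ) h2
    rw [MvPolynomial.smul_eq_C_mul] at h1' h2'
    rw [show ((C (3:ℂ)):MvPolynomial (Fin 3) ℂ) = 3 from map_ofNat _ 3] at h1'
    rw [show ((C (2:ℂ)):MvPolynomial (Fin 3) ℂ) = 2 from map_ofNat _ 2] at h2'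
    exact MC.sub_mem h1' h2'
  · rw [E4]
    have h1 : E (2,j+1,m,k) ∈ MC := E_mem_MC (by rw [mem_SC]; omega)
    have h2 : E (1,j,m+1,k) ∈ MC := E_mem_MC (by rw [mem_SC]; omega)
    have h1' := MC.smul_mem (3:ℂ) h1
    have h2' := MC.smul_mem (2:ℂ) h2
    rw [MvPolynomial.smul_eq_C_mul] at h1' h2'
    rw [show ((C (3:ℂ)):MvPolynomial (Fin 3) ℂ) = 3 from map_ofNat _ 3] at h1'
    rw [show ((C (2:ℂ)):MvPolynomial (Fin 3) ℂ) = 2 from map_ofNat _ 2] at h2'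
    exact MC.sub_mem h1' h2'

lemma EmulE {q q' : ℕ × ℕ × ℕ × ℕ} (h : q ∈ SC) (h' : q' ∈ SC) : E q * E q' ∈ MC := by
  rw [E_mul]
  obtain ⟨h1, h2⟩ := h
  obtain ⟨h1', h2'⟩ := h'
  exact red _ _ _ _ (by omega) (by omega)

lemma MC_mul_mem {p r : MvPolynomial (Fin 3) ℂ} (hp : p ∈ MC) (hr : r ∈ MC) : p * r ∈ MC := by
  have key : ∀ x ∈ E '' SC, ∀ r ∈ MC, x * r ∈ MC := by
    rintro x ⟨q, hq, rfl⟩ r hr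
    induction hr using Submodule.span_induction with
    | mem y hy => obtain ⟨q', hq', rfl⟩ := hy; exact EmulE hq hq'
    | zero => simpa using MC.zero_mem
    | add y z _ _ iy iz => rw [mul_add]; exact MC.add_mem iy iz
    | smul a y _ iy => rw [mul_smul_comm]; exact MC.smul_mem a iy
  induction hp using Submodule.span_induction with
  | mem x hx => exact key x hx r hr
  | zero => simpa using MC.zero_mem
  | add y z _ _ iy iz => rw [add_mul]; exact MC.add_mem iy iz
  | smul a y _ iy => rw [smul_mul_assoc]; exact MC.smul_mem a iy

lemma one_mem_MC : (1 : MvPolynomial (Fin 3) ℂ) ∈ MC := by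
  have : E (0,0,0,0) = 1 := by simp [E]
  rw [← this]; exact E_mem_MC (by rw [mem_SC]; omega)

noncomputable def MCa : Subalgebra ℂ (MvPolynomial (Fin 3) ℂ) where
  carrier := MC
  mul_mem' := MC_mul_mem
  add_mem' := fun h h' => MC.add_mem h h'
  one_mem' := one_mem_MC
  zero_mem' := MC.zero_mem
  algebraMap_mem' := fun r => by
    have := MC.smul_mem r one_mem_MC
    rwa [MvPolynomial.smul_eq_C_mul, mul_one] at this

lemma vP_eq : E (0,1,0,0) = vP := by simp [E]
lemma cP_eq : E (0,0,1,0) = cP := by simp [E]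
lemma zP_eq : E (0,0,0,1) = zP := by simp [E]
lemma xzP_eq : E (1,0,0,1) = xP * zP := by simp [E]

lemma yz_identity : (48:ℂ) • (yP * zP) = E (2,0,0,1) - E (0,1,0,1) := by
  rw [MvPolynomial.smul_eq_C_mul, C48]
  simp only [E, vP]
  ring

lemma B_le_MC : Subalgebra.toSubmodule B ≤ MC := by
  have : B ≤ MCa := by
    rw [B]
    apply Algebra.adjoin_le
    intro g hg
    simp only [Set.mem_insert_iff, Set.mem_singleton_iff] at hg
    rcases hg with h | h | h | h | h <;> subst h
    · show vP ∈ MC; exact vP_eq ▸ E_mem_MC (by rw [mem_SC]; omega)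
    · show cP ∈ MC; exact cP_eq ▸ E_mem_MC (by rw [mem_SC]; omega)
    · show zP ∈ MC; exact zP_eq ▸ E_mem_MC (by rw [mem_SC]; omega)
    · show xP * zP ∈ MC; exact xzP_eq ▸ E_mem_MC (by rw [mem_SC]; omega)
    · show _ ∈ MC
      rw [← Submodule.smul_mem_iff MC (show (48:ℂ) ≠ 0 by norm_num), yz_identity]
      exact MC.sub_mem (E_mem_MC (by rw [mem_SC]; omega)) (E_mem_MC (by rw [mem_SC]; omega))
  exact this

lemma vP_mem_B : vP ∈ B := Algebra.subset_adjoin (Or.inl rfl)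
lemma cP_mem_B : cP ∈ B := Algebra.subset_adjoin (Or.inr (Or.inl rfl))
lemma zP_mem_B : zP ∈ B := Algebra.subset_adjoin (Or.inr (Or.inr (Or.inl rfl)))
lemma xz_mem_B : xP * zP ∈ B := Algebra.subset_adjoin (Or.inr (Or.inr (Or.inr (Or.inl rfl))))
lemma yz_mem_B : yP * zP ∈ B := Algebra.subset_adjoin (Or.inr (Or.inr (Or.inr (Or.inr rfl))))

lemma x2z_mem_B : xP^2 * zP ∈ B := by
  have : xP^2 * zP = 48 * (yP * zP) + vP * zP := by rw [vP]; ring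
  rw [this]
  refine B.add_mem ?_ (B.mul_mem vP_mem_B zP_mem_B)
  rw [show ((48:MvPolynomial (Fin 3) ℂ)) = C (48:ℂ) from C48.symm, ← MvPolynomial.smul_eq_C_mul]
  exact B.smul_mem yz_mem_B _

lemma MC_le_B : MC ≤ Subalgebra.toSubmodule B := by
  rw [MC]
  apply Submodule.span_le.2
  rintro x ⟨⟨i,j,m,k⟩, ⟨hi, hk⟩, rfl⟩
  show E (i,j,m,k) ∈ B
  have hk' : i = 0 ∨ 1 ≤ k := hk
  have hi' : i ≤ 2 := hi
  clear hk hi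
  have base : vP^j * cP^m ∈ B := B.mul_mem (B.pow_mem vP_mem_B j) (B.pow_mem cP_mem_B m)
  interval_cases i
  · have : E (0,j,m,k) = vP^j * cP^m * zP^k := by simp [E]
    rw [this]; exact B.mul_mem base (B.pow_mem zP_mem_B k)
  · obtain ⟨k', rfl⟩ : ∃ k', k = k'+1 := ⟨k-1, by omega⟩
    have : E (1,j,m,k'+1) = (xP * zP) * (vP^j * cP^m * zP^k') := by
      simp [E, pow_succ]; ring
    rw [this]
    exact B.mul_mem xz_mem_B (B.mul_mem base (B.pow_mem zP_mem_B k'))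
  · obtain ⟨k', rfl⟩ : ∃ k', k = k'+1 := ⟨k-1, by omega⟩
    have : E (2,j,m,k'+1) = (xP^2 * zP) * (vP^j * cP^m * zP^k') := by
      simp [E, pow_succ]; ring
    rw [this]
    exact B.mul_mem x2z_mem_B (B.mul_mem base (B.pow_mem zP_mem_B k'))

lemma B_eq_MC : Subalgebra.toSubmodule B = MC := le_antisymm B_le_MC MC_le_B

lemma mem_SF {i j m k : ℕ} : (i,j,m,k) ∈ SF ↔ i ≤ 2 := Iff.rfl

lemma xE (i j m k : ℕ) : xP * E (i,j,m,k) = E (i+1,j,m,k) := by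
  simp only [E, pow_succ]; ring

lemma vE (i j m k : ℕ) : vP * E (i,j,m,k) = E (i,j+1,m,k) := by
  simp only [E, pow_succ]; ring

lemma zE (i j m k : ℕ) : zP * E (i,j,m,k) = E (i,j,m,k+1) := by
  simp only [E, pow_succ]; ring

lemma mulx_MF {p : MvPolynomial (Fin 3) ℂ} (hp : p ∈ MF) : xP * p ∈ MF := by
  induction hp using Submodule.span_induction with
  | mem y hy =>
    obtain ⟨⟨i,j,m,k⟩, hq, rfl⟩ := hy
    have hi : i ≤ 2 := hq
    rw [xE]
    interval_cases i
    · exact E_mem_MF (by rw [mem_SF]; try omega)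
    · exact E_mem_MF (by rw [mem_SF]; try omega)
    · rw [E3]
      have h1 := MF.smul_mem (3:ℂ) (E_mem_MF (q := (1,j+1,m,k)) (by rw [mem_SF]; try omega))
      have h2 := MF.smul_mem (2:ℂ) (E_mem_MF (q := (0,j,m+1,k)) (by rw [mem_SF]; try omega))
      rw [MvPolynomial.smul_eq_C_mul] at h1 h2
      rw [show ((C (3:ℂ)):MvPolynomial (Fin 3) ℂ) = 3 from map_ofNat _ 3] at h1
      rw [show ((C (2:ℂ)):MvPolynomial (Fin 3) ℂ) = 2 from map_ofNat _ 2] at h2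
      exact MF.sub_mem h1 h2
  | zero => simpa using MF.zero_mem
  | add y z _ _ iy iz => rw [mul_add]; exact MF.add_mem iy iz
  | smul a y _ iy => rw [mul_smul_comm]; exact MF.smul_mem a iy

lemma mulv_MF {p : MvPolynomial (Fin 3) ℂ} (hp : p ∈ MF) : vP * p ∈ MF := by
  induction hp using Submodule.span_induction with
  | mem y hy =>
    obtain ⟨⟨i,j,m,k⟩, hq, rfl⟩ := hy
    rw [vE]
    exact E_mem_MF hq
  | zero => simpa using MF.zero_mem
  | add y z _ _ iy iz => rw [mul_add]; exact MF.add_mem iy iz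
  | smul a y _ iy => rw [mul_smul_comm]; exact MF.smul_mem a iy

lemma mulz_MF {p : MvPolynomial (Fin 3) ℂ} (hp : p ∈ MF) : zP * p ∈ MF := by
  induction hp using Submodule.span_induction with
  | mem y hy =>
    obtain ⟨⟨i,j,m,k⟩, hq, rfl⟩ := hy
    rw [zE]
    exact E_mem_MF hq
  | zero => simpa using MF.zero_mem
  | add y z _ _ iy iz => rw [mul_add]; exact MF.add_mem iy iz
  | smul a y _ iy => rw [mul_smul_comm]; exact MF.smul_mem a iy

lemma muly_MF {p : MvPolynomial (Fin 3) ℂ} (hp : p ∈ MF) : yP * p ∈ MF := by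
  have hy : (48:ℂ) • (yP * p) = xP * (xP * p) - vP * p := by
    rw [MvPolynomial.smul_eq_C_mul, C48, vP]
    ring
  rw [← Submodule.smul_mem_iff MF (show (48:ℂ) ≠ 0 by norm_num), hy]
  exact MF.sub_mem (mulx_MF (mulx_MF hp)) (mulv_MF hp)

lemma MF_top (p : MvPolynomial (Fin 3) ℂ) : p ∈ MF := by
  induction p using MvPolynomial.induction_on with
  | C a =>
    have h1 : (1 : MvPolynomial (Fin 3) ℂ) ∈ MF := by
      have : E (0,0,0,0) = 1 := by simp [E]
      rw [← this]; exact E_mem_MF (by rw [mem_SF]; try omega)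
    have := MF.smul_mem a h1
    rwa [MvPolynomial.smul_eq_C_mul, mul_one] at this
  | add p q hp hq => exact MF.add_mem hp hq
  | mul_X p i hp =>
    rw [mul_comm]
    fin_cases i
    · exact mulx_MF hp
    · exact muly_MF hp
    · exact mulz_MF hp

/-! ### graded pieces as spans -/

lemma span_cap (S : Set (ℕ × ℕ × ℕ × ℕ)) (n : ℕ) {p : MvPolynomial (Fin 3) ℂ}
    (hp : p ∈ Submodule.span ℂ (E '' S)) (hw : p ∈ Wn n) :
    p ∈ Submodule.span ℂ (E '' {q ∈ S | degQ q = n}) := by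
  classical
  have hp2 : p = weightedHomogeneousComponent wts n p := by
    rw [weightedHomogeneousComponent_of_mem hw]; simp
  have h3 : weightedHomogeneousComponent wts n p
      ∈ Submodule.map (weightedHomogeneousComponent wts n) (Submodule.span ℂ (E '' S)) :=
    Submodule.mem_map_of_mem hp
  rw [Submodule.map_span] at h3
  rw [hp2]
  refine Submodule.span_le.2 ?_ h3
  rintro x ⟨y, ⟨q, hq, rfl⟩, rfl⟩
  have : weightedHomogeneousComponent wts n (E q) = if n = degQ q then E q else 0 :=
    weightedHomogeneousComponent_of_mem (E_hom q)
  rw [this]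
  split_ifs with h
  · exact Submodule.subset_span ⟨q, ⟨hq, h.symm⟩, rfl⟩
  · exact Submodule.zero_mem _

lemma Wn_eq (n : ℕ) : Wn n = Submodule.span ℂ (E '' {q ∈ SF | degQ q = n}) := by
  apply le_antisymm
  · intro p hw
    exact span_cap SF n (MF_top p) hw
  · refine Submodule.span_le.2 ?_
    rintro x ⟨q, ⟨_, hdeg⟩, rfl⟩
    rw [← hdeg]
    exact E_hom q

lemma Bk_eq (n : ℕ) : Bk n = Submodule.span ℂ (E '' {q ∈ SC | degQ q = n}) := by
  apply le_antisymm
  · rintro p ⟨hb, hw⟩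
    have hb' : p ∈ MC := B_le_MC hb
    exact span_cap SC n hb' hw
  · refine Submodule.span_le.2 ?_
    rintro x ⟨q, ⟨hq, hdeg⟩, rfl⟩
    refine ⟨MC_le_B (E_mem_MC hq), ?_⟩
    show E q ∈ Wn n
    rw [← hdeg]
    exact E_hom q

/-! ### monomial basis of `Wn` -/

noncomputable def fsOf (t : ℕ × ℕ × ℕ) : Fin 3 →₀ ℕ :=
  Finsupp.single 0 t.1 + Finsupp.single 1 t.2.1 + Finsupp.single 2 t.2.2

lemma fsOf_apply (t : ℕ × ℕ × ℕ) :
    fsOf t 0 = t.1 ∧ fsOf t 1 = t.2.1 ∧ fsOf t 2 = t.2.2 := by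
  refine ⟨?_, ?_, ?_⟩ <;> simp [fsOf, Finsupp.single_apply]

lemma fsOf_inj : Function.Injective fsOf := by
  intro s t h
  have hs := fsOf_apply s
  have ht := fsOf_apply t
  rw [h] at hs
  ext1
  · omega
  · ext1 <;> omega

lemma fin3_decomp (d : Fin 3 →₀ ℕ) : fsOf (d 0, d 1, d 2) = d := by
  ext a
  fin_cases a <;> simp [fsOf, Finsupp.single_apply]

lemma weight_single (i : Fin 3) (c : ℕ) :
    (Finsupp.weight wts) (Finsupp.single i c) = c * wts i := by
  rw [Finsupp.weight_apply, Finsupp.sum_single_index]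
  · rw [smul_eq_mul]
  · simp

lemma weight_fsOf (t : ℕ × ℕ × ℕ) :
    (Finsupp.weight wts) (fsOf t) = 2*t.1 + 4*t.2.1 + 6*t.2.2 := by
  simp only [fsOf, map_add, weight_single]
  norm_num [wts, Matrix.cons_val_two]
  try ring

lemma Wn_eq_mon (n : ℕ) :
    Wn n = Submodule.span ℂ ((fun t => monomial (fsOf t) (1:ℂ)) '' ↑(Mon n)) := by
  apply le_antisymm
  · intro p hw
    have hsum := MvPolynomial.support_sum_monomial_coeff p
    rw [← hsum]
    refine Submodule.sum_mem _ ?_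
    intro d hd
    have hwt : (Finsupp.weight wts) d = n := hw (MvPolynomial.mem_support_iff.1 hd)
    have hmem : (d 0, d 1, d 2) ∈ Mon n := by
      rw [mem_Mon]
      have := weight_fsOf (d 0, d 1, d 2)
      rw [fin3_decomp d] at this
      omega
    have : monomial d (coeff d p) = (coeff d p) • monomial (fsOf (d 0, d 1, d 2)) (1:ℂ) := by
      rw [fin3_decomp d, MvPolynomial.smul_monomial, smul_eq_mul, mul_one]
    rw [this]
    exact Submodule.smul_mem _ _ (Submodule.subset_span ⟨(d 0, d 1, d 2), hmem, rfl⟩)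
  · refine Submodule.span_le.2 ?_
    rintro x ⟨t, ht, rfl⟩
    have ht' := mem_Mon.1 ht
    show _ ∈ Wn n
    refine (mem_weightedHomogeneousSubmodule _ _ _ _).2 ?_
    apply isWeightedHomogeneous_monomial
    rw [weight_fsOf]
    try omega

lemma li_mon (n : ℕ) :
    LinearIndependent ℂ (fun t : ↥(Mon n) => monomial (fsOf t.val) (1:ℂ)) := by
  have h := (MvPolynomial.basisMonomials (Fin 3) ℂ).linearIndependent.comp
    (fun t : ↥(Mon n) => fsOf t.val) (fsOf_inj.comp Subtype.val_injective)
  convert h using 1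
  · funext t
    rw [Function.comp_apply, MvPolynomial.coe_basisMonomials]
  all_goals rfl

lemma finrank_Wn (n : ℕ) : Module.finrank ℂ (Wn n) = (Mon n).card := by
  have h1 : Wn n = Submodule.span ℂ
      (Set.range (fun t : ↥(Mon n) => monomial (fsOf t.val) (1:ℂ))) := by
    rw [Wn_eq_mon n]
    congr 1
    exact Set.image_eq_range _ _
  rw [h1, finrank_span_eq_card (li_mon n), Fintype.card_coe]

/-! ### independence of the `E` family in degree `n` -/

lemma SF_deg_eq (n : ℕ) : {q ∈ SF | degQ q = n} = ↑(FF n) := by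
  ext q
  simp only [Set.mem_setOf_eq, Finset.coe_filter, Finset.mem_coe, mem_FF, SF]
  try tauto

lemma SC_deg_eq (n : ℕ) : {q ∈ SC | degQ q = n} = ↑(FC n) := by
  ext q
  simp only [Set.mem_setOf_eq, Finset.coe_filter, Finset.mem_coe, mem_FC, SC]
  try tauto

noncomputable def famW (n : ℕ) (q : ↥(FF n)) : ↥(Wn n) :=
  ⟨E q.val, by
    have h := E_hom q.val
    rwa [(mem_FF.1 q.2).2] at h⟩

lemma famW_span (n : ℕ) : ⊤ ≤ Submodule.span ℂ (Set.range (famW n)) := by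
  have hinj := Submodule.map_injective_of_injective (Wn n).injective_subtype
  have hmap : Submodule.map (Wn n).subtype (Submodule.span ℂ (Set.range (famW n)))
      = Submodule.map (Wn n).subtype ⊤ := by
    rw [Submodule.map_span, Submodule.map_subtype_top]
    have himg : (Wn n).subtype '' Set.range (famW n) = E '' ↑(FF n) := by
      ext y
      constructor
      · rintro ⟨w, ⟨q, rfl⟩, rfl⟩
        exact ⟨q.val, q.2, rfl⟩
      · rintro ⟨q, hq, rfl⟩
        exact ⟨famW n ⟨q, hq⟩, ⟨⟨q, hq⟩, rfl⟩, rfl⟩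
    rw [himg, ← SF_deg_eq, ← Wn_eq]
  exact le_of_eq (hinj hmap).symm

lemma li_famW (n : ℕ) : LinearIndependent ℂ (famW n) := by
  refine linearIndependent_of_top_le_span_of_card_eq_finrank (famW_span n) ?_
  rw [Fintype.card_coe, ← Mon_card, finrank_Wn]

lemma li_E_FF (n : ℕ) : LinearIndependent ℂ (fun q : ↥(FF n) => E q.val) :=
  (li_famW n).map' (Wn n).subtype (Submodule.ker_subtype _)

lemma li_E_FC (n : ℕ) : LinearIndependent ℂ (fun q : ↥(FC n) => E q.val) := by
  have hsub : ∀ q : ↥(FC n), q.val ∈ FF n := by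
    intro q
    have := mem_FC.1 q.2
    rw [mem_FF]
    tauto
  have := (li_E_FF n).comp (fun q : ↥(FC n) => (⟨q.val, hsub q⟩ : ↥(FF n)))
    (by intro a b h
        have h2 : (⟨a.val, hsub a⟩ : ↥(FF n)).val = (⟨b.val, hsub b⟩ : ↥(FF n)).val :=
          congrArg Subtype.val h
        exact Subtype.val_injective h2)
  exact this

lemma finrank_Bk (n : ℕ) : Module.finrank ℂ (Bk n) = (FC n).card := by
  have h1 : Bk n = Submodule.span ℂ (Set.range (fun q : ↥(FC n) => E q.val)) := by
    rw [Bk_eq n, SC_deg_eq n]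
    congr 1
    exact Set.image_eq_range _ _
  rw [h1, finrank_span_eq_card (li_E_FC n), Fintype.card_coe]

theorem hilbert_series_B :
    (PowerSeries.mk fun k => (Module.finrank ℂ (Bk k) : ℤ))
        * ((1 - (PowerSeries.X : PowerSeries ℤ) ^ 4) * (1 - PowerSeries.X ^ 6) ^ 2)
      = 1 + PowerSeries.X ^ 8 + PowerSeries.X ^ 10 := by
  have hmk : (PowerSeries.mk fun k => (Module.finrank ℂ (Bk k) : ℤ))
      = PowerSeries.mk fun n => ((FC n).card : ℤ) := by
    ext n; simp [finrank_Bk]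
  rw [hmk, series_FC]
  calc (1 + (PowerSeries.X : PowerSeries ℤ)^8 + PowerSeries.X^10)
        * PowerSeries.mk (fun n => ((T3 n).card : ℤ))
        * ((1 - PowerSeries.X ^ 4) * (1 - PowerSeries.X ^ 6) ^ 2)
      = (1 + PowerSeries.X^8 + PowerSeries.X^10)
        * ((PowerSeries.mk (fun n => ((T3 n).card : ℤ)) * (1 - PowerSeries.X ^ 6))
            * (1 - PowerSeries.X ^ 6) * (1 - PowerSeries.X ^ 4)) := by ring
    _ = 1 + PowerSeries.X ^ 8 + PowerSeries.X ^ 10 := by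
        rw [series_T3, series_T2, series_ind, mul_one]
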